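/- Negative introspection fails in EGL: in the fuzzy muddy children model with S = {0,0.5,1}², r_a((x,y),(x',y')) = 1 if y=y', 0.36 if |y−y'|=0.5, 0.32 if |y−y'|=1, and V((x,y))(m_b) = y, the Gödel value of ¬B_a m_b → B_a(¬B_a m_b) at state (0.5, 0) equals 0.64, hence is not 1. -/

import Mathlib

/-- Gödel negation on [0,1]. -/
noncomputable def GN (x : ℝ) : ℝ := if x = 0 then 1 else 0

/-- Gödel implication on [0,1]. -/
noncomputable def GI (x y : ℝ) : ℝ := if x ≤ y then 1 else y

/-- Fuzzy belief operator on a finite nonempty state set. -/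
noncomputable def Bel {S : Type*} [Fintype S] [Nonempty S]
    (r : S → S → ℝ) (f : S → ℝ) (s : S) : ℝ :=
  Finset.univ.inf' Finset.univ_nonempty fun s' => max (1 - r s s') (f s')

/-- The three mud-values 0, 0.5, 1. -/
noncomputable def mud : Fin 3 → ℝ := ![0, 0.5, 1]

/-- Agent a's indistinguishing function on states (x,y) ∈ {0,0.5,1}²,
depending on the difference of the second coordinates. -/
noncomputable def ra (s t : Fin 3 × Fin 3) : ℝ :=
  if mud s.2 = mud t.2 then 1
  else if |mud s.2 - mud t.2| = 0.5 then 0.36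
  else 0.32

/-- The atomic proposition m_b: value of the second coordinate. -/
noncomputable def mb (s : Fin 3 × Fin 3) : ℝ := mud s.2


lemma univ9 : (Finset.univ : Finset (Fin 3 × Fin 3)) =
    {(0,0),(0,1),(0,2),(1,0),(1,1),(1,2),(2,0),(2,1),(2,2)} := by decide

set_option maxHeartbeats 1000000 in
lemma bel_expand (r : Fin 3 × Fin 3 → Fin 3 × Fin 3 → ℝ) (f : Fin 3 × Fin 3 → ℝ) (s) :
    Bel r f s = min (max (1 - r s (0,0)) (f (0,0))) (min (max (1 - r s (0,1)) (f (0,1)))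
      (min (max (1 - r s (0,2)) (f (0,2))) (min (max (1 - r s (1,0)) (f (1,0)))
      (min (max (1 - r s (1,1)) (f (1,1))) (min (max (1 - r s (1,2)) (f (1,2)))
      (min (max (1 - r s (2,0)) (f (2,0))) (min (max (1 - r s (2,1)) (f (2,1)))
      (max (1 - r s (2,2)) (f (2,2)))))))))) := by
  rw [Bel]
  simp only [univ9, Finset.inf'_insert, Finset.inf'_singleton]
  rfl

lemma b0 (x : Fin 3) : Bel ra mb (x, 0) = 0 := by
  rw [bel_expand]; norm_num [ra, mb, mud, abs, Matrix.cons_val_two, Matrix.vecHead, Matrix.vecTail]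
lemma b1 (x : Fin 3) : Bel ra mb (x, 1) = 0.5 := by
  rw [bel_expand]; norm_num [ra, mb, mud, abs, Matrix.cons_val_two, Matrix.vecHead, Matrix.vecTail]
lemma b2 (x : Fin 3) : Bel ra mb (x, 2) = 0.64 := by
  rw [bel_expand]; norm_num [ra, mb, mud, abs, Matrix.cons_val_two, Matrix.vecHead, Matrix.vecTail]

theorem negative_introspection_fails :
    GI (GN (Bel ra mb (1, 0)))
       (Bel ra (fun s' => GN (Bel ra mb s')) (1, 0)) = 0.64 ∧
    GI (GN (Bel ra mb (1, 0)))
       (Bel ra (fun s' => GN (Bel ra mb s')) (1, 0)) ≠ 1 := by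
  have h2 : Bel ra (fun s' => GN (Bel ra mb s')) (1, 0) = 0.64 := by
    rw [bel_expand]
    simp only [b0, b1, b2, GN]
    norm_num [ra, mud, abs, Matrix.cons_val_two, Matrix.vecHead, Matrix.vecTail]
  rw [b0, h2]
  norm_num [GN, GI]
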